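/- Under the identification of each F3-admissible tuple t with its related tuple T(t), where T(r, a, δφ, δF, δφF) = (19 − r, a + 2δF − 1, δφF, 1 − δF, δφ), the set of F3-admissible tuples has exactly 51 equivalence classes (pairs {t, T(t)}). (These 51 classes label the connected components of moduli of real non-singular curves A ∈ |−2K_{F₃}|, identifying related pairs of positive curves.) -/

import Mathlib

/-- The invariants `(r, a, δφ, δF, δφF)` of the paper, with `r, a` integers and
`δφ, δF, δφF ∈ {0,1}`, satisfying conditions 0.1--0.7 and I.1--I.8 of the
`𝔽₃` case. -/
def F3Admissible : ℤ × ℤ × ℤ × ℤ × ℤ → Prop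
  | (r, a, dphi, dF, dphiF) =>
    (dphi = 0 ∨ dphi = 1) ∧ (dF = 0 ∨ dF = 1) ∧ (dphiF = 0 ∨ dphiF = 1) ∧
    (1 ≤ r ∧ r ≤ 18) ∧ (0 ≤ a ∧ a ≤ r ∧ a ≤ 20 - r) ∧
    (r + a ≡ 0 [ZMOD 2]) ∧ (dphi = 0 → r ≡ 2 [ZMOD 4]) ∧
    (a = 0 → dphi = 0 ∧ r ≡ 2 [ZMOD 8]) ∧
    (a = 1 → (r ≡ 1 [ZMOD 8] ∨ r ≡ 3 [ZMOD 8])) ∧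
    (a = 2 ∧ r ≡ 6 [ZMOD 8] → dphi = 0) ∧
    (a = r ∧ dphi = 0 → r ≡ 2 [ZMOD 8]) ∧
    (a = 20 - r ∧ dphi = 0 → r ≡ 2 [ZMOD 8]) ∧
    (dF = 0 → dphi = 1) ∧
    (dphiF = 0 → dF = 0 ∧ dphi = 1 ∧ r ≡ 1 [ZMOD 4]) ∧
    (a = 20 - r → dF = 0) ∧
    (a = 20 - r ∧ dphiF = 0 → r ≡ 1 [ZMOD 8]) ∧
    (a = 0 → dF = 1) ∧
    (a = 1 ∧ dF = 0 → dphiF = 0 ∧ r ≡ 1 [ZMOD 8]) ∧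
    (a = 2 ∧ dF = 0 → (r ≡ 0 [ZMOD 8] ∨ r ≡ 2 [ZMOD 8])) ∧
    (a = 3 ∧ dF = 0 ∧ r ≡ 5 [ZMOD 8] → dphiF = 0)


/-- The map `T(r, a, δφ, δF, δφF) = (19 − r, a + 2δF − 1, δφF, 1 − δF, δφ)`
encoding the passage from `φ` to the related involution `φ̃ = τφ`. -/
def F3Related : ℤ × ℤ × ℤ × ℤ × ℤ → ℤ × ℤ × ℤ × ℤ × ℤ
  | (r, a, dphi, dF, dphiF) => (19 - r, a + 2 * dF - 1, dphiF, 1 - dF, dphi)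

/-- Identifying each `𝔽₃`-admissible tuple `t` with its related tuple `T t`,
there are exactly 51 equivalence classes (pairs `{t, T t}`): these label the
connected components of moduli of real non-singular curves `A ∈ |-2K_{𝔽₃}|`. -/

instance F3Admissible.dec : DecidablePred F3Admissible
  | (r, a, dphi, dF, dphiF) => by unfold F3Admissible; infer_instance

/-- The finite set of all `F3`-admissible tuples. -/
noncomputable def F3S : Finset (ℤ × ℤ × ℤ × ℤ × ℤ) :=
  (Finset.Icc 1 18 ×ˢ Finset.Icc 0 10 ×ˢ Finset.Icc 0 1 ×ˢ Finset.Icc 0 1 ×ˢ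
    Finset.Icc 0 1).filter F3Admissible

/-- Canonical representatives: admissible tuples with `r ≤ 9`. -/
noncomputable def F3R : Finset (ℤ × ℤ × ℤ × ℤ × ℤ) := F3S.filter (fun t => t.1 ≤ 9)

lemma F3_mem_S : ∀ t, F3Admissible t → t ∈ F3S
  | (r, a, x, y, z), h => by
    refine Finset.mem_filter.2 ⟨?_, h⟩
    obtain ⟨h1, h2, h3, ⟨h4, h5⟩, ⟨h6, h7, h8⟩, -⟩ := h
    simp only [Finset.mem_product, Finset.mem_Icc]
    rcases h1 with rfl | rfl <;> rcases h2 with rfl | rfl <;> rcases h3 with rfl | rfl <;>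
      refine ⟨⟨h4, h5⟩, ⟨h6, by omega⟩, ?_, ?_, ?_⟩ <;> norm_num

lemma F3_related_related : ∀ t, F3Related (F3Related t) = t
  | (r, a, x, y, z) => by
    simp only [F3Related, Prod.mk.injEq, and_true, true_and]
    omega

lemma F3_related_fst : ∀ t, (F3Related t).1 = 19 - t.1
  | (_, _, _, _, _) => rfl

lemma F3_cover : ∀ t ∈ F3S, t ∈ F3R ∨ F3Related t ∈ F3R := by decide

lemma F3R_card : F3R.card = 51 := by decide

lemma F3R_adm {t} (ht : t ∈ F3R) : F3Admissible t :=
  (Finset.mem_filter.1 (Finset.mem_filter.1 ht).1).2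

lemma F3R_small {t} (ht : t ∈ F3R) : t.1 ≤ 9 := (Finset.mem_filter.1 ht).2

theorem card_F3Admissible_pairs :
    Set.ncard {p : Set (ℤ × ℤ × ℤ × ℤ × ℤ) |
      ∃ t : ℤ × ℤ × ℤ × ℤ × ℤ, F3Admissible t ∧ p = {t, F3Related t}} = 51 := by
  have hset : {p : Set (ℤ × ℤ × ℤ × ℤ × ℤ) |
      ∃ t : ℤ × ℤ × ℤ × ℤ × ℤ, F3Admissible t ∧ p = {t, F3Related t}} =
      (fun t => ({t, F3Related t} : Set (ℤ × ℤ × ℤ × ℤ × ℤ))) '' (F3R : Set _) := by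
    ext p
    constructor
    · rintro ⟨t, ht, rfl⟩
      rcases F3_cover t (F3_mem_S t ht) with h | h
      · exact ⟨t, h, rfl⟩
      · refine ⟨F3Related t, h, ?_⟩
        show ({F3Related t, F3Related (F3Related t)} : Set (ℤ × ℤ × ℤ × ℤ × ℤ)) =
          {t, F3Related t}
        rw [F3_related_related, Set.pair_comm]
    · rintro ⟨t, ht, rfl⟩
      exact ⟨t, F3R_adm ht, rfl⟩
  rw [hset, Set.ncard_image_of_injOn, Set.ncard_coe_finset, F3R_card]
  intro t ht s hs h
  have h' : ({t, F3Related t} : Set (ℤ × ℤ × ℤ × ℤ × ℤ)) = {s, F3Related s} := h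
  have h1 : t ∈ ({s, F3Related s} : Set (ℤ × ℤ × ℤ × ℤ × ℤ)) := by
    rw [← h']; exact Set.mem_insert _ _
  rcases h1 with rfl | h1
  · rfl
  · exfalso
    have := F3R_small ht
    have := F3R_small hs
    have h2 : t.1 = 19 - s.1 := by rw [h1, F3_related_fst]
    omega
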